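/- arXiv:1105.0178 — 2 statements merged into one kernel-verified Lean document; each statement's English description precedes it below -/
import Mathlib

section
/- For every positive integer n, ∑_{k=0}^{n−1} (1/4^k)·C(2k,k)·H_k = 2 − ((n+1)/4^n)·C(2n+2, n+1) + (2n/4^n)·C(2n,n)·H_n. -/
def harmonic' (n : ℕ) : ℚ := ∑ j ∈ Finset.Icc 1 n, (1 / j : ℚ)

lemma harmonic'_succ (n : ℕ) : harmonic' (n + 1) = harmonic' n + 1 / (n + 1) := by
  unfold harmonic'
  rw [Finset.sum_Icc_succ_top (by omega)]
  push_cast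
  ring

lemma central_succ (n : ℕ) :
    ((n : ℚ) + 1) * (Nat.choose (2 * n + 2) (n + 1)) = 2 * (2 * n + 1) * (Nat.choose (2 * n) n) := by
  have h := Nat.succ_mul_centralBinom_succ n
  have := congrArg (Nat.cast : ℕ → ℚ) h
  simp only [Nat.centralBinom] at this
  push_cast at this
  rw [show 2 * (n + 1) = 2 * n + 2 by ring] at this
  linarith

theorem stmt_6 (n : ℕ) (hn : 0 < n) :
    ∑ k ∈ Finset.range n, (1 / 4 ^ k : ℚ) * (Nat.choose (2 * k) k) * harmonic' k
      = 2 - ((n + 1 : ℚ) / 4 ^ n) * (Nat.choose (2 * n + 2) (n + 1))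
        + ((2 * n : ℚ) / 4 ^ n) * (Nat.choose (2 * n) n) * harmonic' n := by
  induction n with
  | zero => omega
  | succ m ih =>
    rcases Nat.eq_zero_or_pos m with rfl | hm
    · norm_num [harmonic', Nat.choose]
    · rw [Finset.sum_range_succ, ih hm, harmonic'_succ]
      have h1 := central_succ m
      have h2 := central_succ (m + 1)
      rw [show 2 * (m + 1) + 2 = 2 * (m + 1) + 2 by ring] at h2
      rw [show 2 * (m + 1) = 2 * m + 2 by ring] at h2
      have hc : ((Nat.choose (2 * m + 2) (m + 1)) : ℚ)
          = 2 * (2 * m + 1) * (Nat.choose (2 * m) m) / (m + 1) := by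
        field_simp
        linarith
      have hc2 : ((Nat.choose (2 * m + 2 + 2) (m + 1 + 1)) : ℚ)
          = 2 * (2 * (m + 1) + 1) * (Nat.choose (2 * m + 2) (m + 1)) / (m + 1 + 1) := by
        field_simp
        push_cast at h2 ⊢
        linarith
      rw [show 2 * (m + 1) + 2 = 2 * m + 2 + 2 from by ring,
          show 2 * (m + 1) = 2 * m + 2 from by ring]
      push_cast
      rw [hc2, hc]
      have h4 : (4 : ℚ) ^ (m + 1) = 4 * 4 ^ m := by ring
      rw [h4]
      have hm1 : ((m : ℚ) + 1) ≠ 0 := by positivity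
      have hm2 : ((m : ℚ) + 1 + 1) ≠ 0 := by positivity
      have h4m : (4 : ℚ) ^ m ≠ 0 := by positivity
      field_simp
      ring
end

section
/- For every nonnegative integer n, ∑_{k=0}^{n} C(n,k)·F_{4k} = 3^n·F_{2n}. -/
open Finset

private lemma pascal_sum (f : ℕ → ℕ) (n : ℕ) :
    ∑ k ∈ range (n + 2), Nat.choose (n + 1) k * f k
      = ∑ k ∈ range (n + 1), Nat.choose n k * (f k + f (k + 1)) := by
  rw [Finset.sum_range_succ' (fun k => Nat.choose (n + 1) k * f k)]
  simp only [Nat.choose_succ_succ, add_mul, Finset.sum_add_distrib, Nat.choose_zero_right, one_mul]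
  have h2 : ∑ k ∈ range (n + 1), Nat.choose n (k + 1) * f (k + 1) + f 0
      = ∑ k ∈ range (n + 1), Nat.choose n k * f k := by
    rw [show f 0 = Nat.choose n 0 * f 0 by simp,
      ← Finset.sum_range_succ' (fun k => Nat.choose n k * f k)]
    rw [Finset.sum_range_succ]
    simp [Nat.choose_succ_self]
  rw [add_assoc, h2]
  simp only [mul_add, Finset.sum_add_distrib]
  ring

private lemma both (n : ℕ) :
    (∑ k ∈ range (n + 1), Nat.choose n k * Nat.fib (4 * k) = 3 ^ n * Nat.fib (2 * n)) ∧
    (∑ k ∈ range (n + 1), Nat.choose n k * Nat.fib (4 * k + 1) = 3 ^ n * Nat.fib (2 * n + 1)) := by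
  induction n with
  | zero => simp
  | succ n ih =>
    obtain ⟨h1, h2⟩ := ih
    have fib4 : ∀ k, Nat.fib (4 * k + 4) = 3 * Nat.fib (4 * k + 1) + 2 * Nat.fib (4 * k) := by
      intro k
      have e2 : Nat.fib (4 * k + 2) = Nat.fib (4 * k) + Nat.fib (4 * k + 1) :=
        Nat.fib_add_two
      have e3 : Nat.fib (4 * k + 3) = Nat.fib (4 * k + 1) + Nat.fib (4 * k + 2) :=
        Nat.fib_add_two
      have e4 : Nat.fib (4 * k + 4) = Nat.fib (4 * k + 2) + Nat.fib (4 * k + 3) :=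
        Nat.fib_add_two
      omega
    have fib5 : ∀ k, Nat.fib (4 * k + 5) = 5 * Nat.fib (4 * k + 1) + 3 * Nat.fib (4 * k) := by
      intro k
      have e2 : Nat.fib (4 * k + 2) = Nat.fib (4 * k) + Nat.fib (4 * k + 1) :=
        Nat.fib_add_two
      have e3 : Nat.fib (4 * k + 3) = Nat.fib (4 * k + 1) + Nat.fib (4 * k + 2) :=
        Nat.fib_add_two
      have e4 : Nat.fib (4 * k + 4) = Nat.fib (4 * k + 2) + Nat.fib (4 * k + 3) :=
        Nat.fib_add_two
      have e5 : Nat.fib (4 * k + 5) = Nat.fib (4 * k + 3) + Nat.fib (4 * k + 4) :=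
        Nat.fib_add_two
      omega
    have g2 : Nat.fib (2 * n + 2) = Nat.fib (2 * n) + Nat.fib (2 * n + 1) := Nat.fib_add_two
    have g3 : Nat.fib (2 * n + 3) = Nat.fib (2 * n + 1) + Nat.fib (2 * n + 2) := Nat.fib_add_two
    constructor
    · have := pascal_sum (fun k => Nat.fib (4 * k)) n
      rw [show n + 1 + 1 = n + 2 from rfl, this]
      have key : ∑ k ∈ range (n + 1), Nat.choose n k *
          (Nat.fib (4 * k) + Nat.fib (4 * (k + 1)))
          = 3 * (∑ k ∈ range (n + 1), Nat.choose n k * Nat.fib (4 * k))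
            + 3 * (∑ k ∈ range (n + 1), Nat.choose n k * Nat.fib (4 * k + 1)) := by
        rw [Finset.mul_sum, Finset.mul_sum, ← Finset.sum_add_distrib]
        apply Finset.sum_congr rfl
        intro k _
        have : 4 * (k + 1) = 4 * k + 4 := by ring
        rw [this, fib4 k]
        ring
      rw [key, h1, h2, show 2 * (n + 1) = 2 * n + 2 from by ring, g2]
      ring
    · have := pascal_sum (fun k => Nat.fib (4 * k + 1)) n
      rw [show n + 1 + 1 = n + 2 from rfl, this]
      have key : ∑ k ∈ range (n + 1), Nat.choose n k *
          (Nat.fib (4 * k + 1) + Nat.fib (4 * (k + 1) + 1))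
          = 3 * (∑ k ∈ range (n + 1), Nat.choose n k * Nat.fib (4 * k))
            + 6 * (∑ k ∈ range (n + 1), Nat.choose n k * Nat.fib (4 * k + 1)) := by
        rw [Finset.mul_sum, Finset.mul_sum, ← Finset.sum_add_distrib]
        apply Finset.sum_congr rfl
        intro k _
        have : 4 * (k + 1) + 1 = 4 * k + 5 := by ring
        rw [this, fib5 k]
        ring
      rw [key, h1, h2, show 2 * (n + 1) + 1 = 2 * n + 3 from by ring, g3, g2]
      ring

theorem stmt_16 (n : ℕ) :
    ∑ k ∈ Finset.range (n + 1), Nat.choose n k * Nat.fib (4 * k)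
      = 3 ^ n * Nat.fib (2 * n) := by
  exact (both n).1
end
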